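/- Under the Lie–Poisson realization hypotheses, fix ε ∈ K and for 2 ≤ i ≤ N and λ ∈ K with λ ≠ 0 and λ ≠ ε define the loop coproducts Δ^(i)_λ(α) := λ⁻¹ • (Σ_{j=1}^{i−1} y α j) + (λ − ε)⁻¹ • (y α i). Then for any two formal Casimirs C, C' for c and any 2 ≤ i, k ≤ N and admissible λ, μ with (i, λ) ≠ (k, μ): {(aeval Δ^(i)_λ) C, (aeval Δ^(k)_μ) C'} = 0. -/

import Mathlib

open scoped BigOperators
open MvPolynomial Finset

/-- A Poisson algebra structure over `K` on a commutative `K`-algebra `B`: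
a `K`-bilinear bracket that is antisymmetric, satisfies the Jacobi identity and
the Leibniz rule. -/
structure PoissonStructure (K B : Type*) [CommRing K] [CommRing B] [Algebra K B] where
  bracket : B →ₗ[K] B →ₗ[K] B
  antisymm : ∀ a b : B, bracket a b = - bracket b a
  jacobi : ∀ a b c : B,
    bracket a (bracket b c) + bracket b (bracket c a) + bracket c (bracket a b) = 0
  leibniz : ∀ a b c : B, bracket a (b * c) = bracket a b * c + b * bracket a c

lemma deriv_aeval {K B : Type*} [CommRing K] [CommRing B] [Algebra K B] {M : ℕ}
    (d : B →ₗ[K] B) (hd : ∀ a b : B, d (a * b) = d a * b + a * d b)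
    (x : Fin M → B) (f : MvPolynomial (Fin M) K) :
    d (aeval x f) = ∑ α, aeval x (pderiv α f) * d (x α) := by
  have h1 : d 1 = 0 := by
    have := hd 1 1; simp only [mul_one, one_mul] at this
    exact left_eq_add.mp this
  induction f using MvPolynomial.induction_on with
  | C a =>
      simp [Algebra.algebraMap_eq_smul_one, map_smul, h1]
  | add f g hf hg => simp [map_add, hf, hg, add_mul, Finset.sum_add_distrib]
  | mul_X f α hf =>
      rw [map_mul, aeval_X, hd, hf]
      simp only [pderiv_mul, pderiv_X, map_add, map_mul, aeval_X, add_mul,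
        Finset.sum_add_distrib, Finset.sum_mul]
      congr 1
      · exact Finset.sum_congr rfl fun β _ => by ring
      · rw [Finset.sum_eq_single α]
        · simp
        · intro β _ hβ
          simp [Pi.single_apply, hβ]
        · simp

lemma sum_rot {ι₁ ι₂ ι₃ A : Type*} [Fintype ι₁] [Fintype ι₂] [Fintype ι₃]
    [AddCommMonoid A] (f : ι₁ → ι₂ → ι₃ → A) :
    ∑ x, ∑ y, ∑ z, f x y z = ∑ z, ∑ x, ∑ y, f x y z := by
  calc ∑ x, ∑ y, ∑ z, f x y z = ∑ x, ∑ z, ∑ y, f x y z :=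
        Finset.sum_congr rfl fun x _ => Finset.sum_comm
    _ = ∑ z, ∑ x, ∑ y, f x y z := Finset.sum_comm

/-- the images of two formal Casimirs under the loop coproducts
`Δ^(i)_λ` and `Δ^(k)_μ` are in involution whenever `(i, λ) ≠ (k, μ)`. -/
theorem loop_coproducts_casimirs_involutive
    {K B : Type*} [Field K] [CharZero K] [CommRing B] [Algebra K B]
    (P : PoissonStructure K B) {M N : ℕ} (hM : 0 < M) (hN : 0 < N)
    (c : Fin M → Fin M → Fin M → K)
    (y : Fin M → Fin N → B)
    (hsep : ∀ (α β : Fin M) (i j : Fin N), i ≠ j → P.bracket (y α i) (y β j) = 0)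
    (hsame : ∀ (α β : Fin M) (i : Fin N),
      P.bracket (y α i) (y β i) = ∑ γ, c α β γ • y γ i)
    (ε : K)
    (D : ℕ → K → Fin M → B)
    (hD : ∀ (i : ℕ) (hi2 : 2 ≤ i) (hiN : i ≤ N) (lam : K) (α : Fin M),
      D i lam α =
        lam⁻¹ • (∑ j ∈ Finset.univ.filter (fun j : Fin N => (j : ℕ) + 1 < i), y α j)
          + (lam - ε)⁻¹ • y α ⟨i - 1, by omega⟩)
    (C C' : MvPolynomial (Fin M) K)
    (hC : ∀ β : Fin M,
      ∑ α, MvPolynomial.pderiv α C * (∑ γ, c α β γ • MvPolynomial.X γ) = 0)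
    (hC' : ∀ β : Fin M,
      ∑ α, MvPolynomial.pderiv α C' * (∑ γ, c α β γ • MvPolynomial.X γ) = 0) :
    ∀ (i k : ℕ), 2 ≤ i → i ≤ N → 2 ≤ k → k ≤ N →
      ∀ (lam mu : K), lam ≠ 0 → lam ≠ ε → mu ≠ 0 → mu ≠ ε →
      (i ≠ k ∨ lam ≠ mu) →
      P.bracket (MvPolynomial.aeval (D i lam) C)
        (MvPolynomial.aeval (D k mu) C') = 0 := by
  intro i k hi2 hiN hk2 hkN lam mu hlam0 hlame hmu0 hmue hne
  -- abbreviations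
  set A : Fin M → B := fun α => aeval (D i lam) (pderiv α C) with hA
  set Bf : Fin M → B := fun β => aeval (D k mu) (pderiv β C') with hBf
  set a : Fin N → K := fun j =>
    if (j : ℕ) + 1 < i then lam⁻¹ else if (j : ℕ) + 1 = i then (lam - ε)⁻¹ else 0 with ha
  set b : Fin N → K := fun j =>
    if (j : ℕ) + 1 < k then mu⁻¹ else if (j : ℕ) + 1 = k then (mu - ε)⁻¹ else 0 with hb
  -- rewriting the coproducts as single sums
  have key : ∀ (m : ℕ) (hm2 : 2 ≤ m) (hmN : m ≤ N) (t : K) (γ : Fin M),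
      D m t γ = ∑ j : Fin N, (if (j : ℕ) + 1 < m then t⁻¹
        else if (j : ℕ) + 1 = m then (t - ε)⁻¹ else 0) • y γ j := by
    intro m hm2 hmN t γ
    rw [hD m hm2 hmN t γ]
    have hsplit : ∀ j : Fin N,
        (if (j : ℕ) + 1 < m then t⁻¹ else if (j : ℕ) + 1 = m then (t - ε)⁻¹ else 0) • y γ j
          = (if (j : ℕ) + 1 < m then t⁻¹ • y γ j else 0)
            + (if (j : ℕ) + 1 = m then (t - ε)⁻¹ • y γ j else 0) := by
      intro j
      by_cases h1 : (j : ℕ) + 1 < m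
      · rw [if_pos h1, if_pos h1, if_neg (by omega), add_zero]
      · by_cases h2 : (j : ℕ) + 1 = m
        · rw [if_neg h1, if_pos h2, if_neg h1, if_pos h2, zero_add]
        · rw [if_neg h1, if_neg h2, if_neg h1, if_neg h2, zero_smul, add_zero]
    rw [Finset.sum_congr rfl fun j _ => hsplit j, Finset.sum_add_distrib]
    congr 1
    · rw [← Finset.sum_filter, Finset.smul_sum]
    · rw [Finset.sum_eq_single (⟨m - 1, by omega⟩ : Fin N)]
      · rw [if_pos (by simp; omega)]
      · intro j _ hj
        rw [if_neg]
        intro h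
        exact hj (Fin.ext (show (j : ℕ) = m - 1 by omega))
      · simp
  have hDa : ∀ γ, D i lam γ = ∑ j, a j • y γ j := key i hi2 hiN lam
  have hDb : ∀ γ, D k mu γ = ∑ j, b j • y γ j := key k hk2 hkN mu
  -- the linear maps T and T'
  set T : (Fin M → B) →ₗ[K] B :=
    { toFun := fun z => ∑ β, Bf β * (∑ α, A α * (∑ γ, c α β γ • z γ)),
      map_add' := by
        intro z w
        simp [Pi.add_apply, smul_add, mul_add, Finset.sum_add_distrib]
      map_smul' := by
        intro r z
        simp only [Pi.smul_apply, RingHom.id_apply]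
        symm
        rw [Finset.smul_sum]
        refine Finset.sum_congr rfl fun _ _ => ?_
        rw [← mul_smul_comm]
        congr 1
        rw [Finset.smul_sum]
        refine Finset.sum_congr rfl fun _ _ => ?_
        rw [← mul_smul_comm]
        congr 1
        rw [Finset.smul_sum]
        refine Finset.sum_congr rfl fun _ _ => ?_
        rw [smul_comm] } with hT
  set T' : (Fin M → B) →ₗ[K] B :=
    { toFun := fun z => ∑ α, A α * (∑ β, Bf β * (∑ γ, c β α γ • z γ)),
      map_add' := by
        intro z w
        simp [Pi.add_apply, smul_add, mul_add, Finset.sum_add_distrib]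
      map_smul' := by
        intro r z
        simp only [Pi.smul_apply, RingHom.id_apply]
        symm
        rw [Finset.smul_sum]
        refine Finset.sum_congr rfl fun _ _ => ?_
        rw [← mul_smul_comm]
        congr 1
        rw [Finset.smul_sum]
        refine Finset.sum_congr rfl fun _ _ => ?_
        rw [← mul_smul_comm]
        congr 1
        rw [Finset.smul_sum]
        refine Finset.sum_congr rfl fun _ _ => ?_
        rw [smul_comm] } with hT'
  set E : Fin N → B := fun j => T (fun γ => y γ j) with hE
  -- Casimir identities transported through aeval
  have hCB : ∀ β, ∑ α, A α * (∑ γ, c α β γ • D i lam γ) = 0 := by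
    intro β
    have h := congrArg (aeval (D i lam)) (hC β)
    simpa [map_sum, map_mul, map_smul, hA] using h
  have hC'B : ∀ β, ∑ α, Bf α * (∑ γ, c α β γ • D k mu γ) = 0 := by
    intro β
    have h := congrArg (aeval (D k mu)) (hC' β)
    simpa [map_sum, map_mul, map_smul, hBf] using h
  have hTD : T (D i lam) = 0 := by
    show ∑ β, Bf β * (∑ α, A α * (∑ γ, c α β γ • D i lam γ)) = 0
    rw [Finset.sum_congr rfl fun β _ => by rw [hCB β, mul_zero]]
    exact Finset.sum_const_zero
  have hT'D : T' (D k mu) = 0 := by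
    show ∑ α, A α * (∑ β, Bf β * (∑ γ, c β α γ • D k mu γ)) = 0
    rw [Finset.sum_congr rfl fun α _ => by rw [hC'B α, mul_zero]]
    exact Finset.sum_const_zero
  -- site antisymmetry
  have hX : ∀ (α β : Fin M) (j : Fin N),
      (∑ γ, c β α γ • y γ j) = -(∑ γ, c α β γ • y γ j) := by
    intro α β j
    have h3 := P.antisymm (y β j) (y α j)
    rw [hsame β α j, hsame α β j] at h3
    exact h3
  have generic : ∀ R : Fin M → Fin M → B, (∀ α β, R β α = -(R α β)) →
      (∑ α, A α * (∑ β, Bf β * R β α)) = -∑ β, Bf β * (∑ α, A α * R α β) := by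
    intro R hR
    simp only [Finset.mul_sum]
    rw [Finset.sum_comm, ← Finset.sum_neg_distrib]
    refine Finset.sum_congr rfl fun β _ => ?_
    rw [← Finset.sum_neg_distrib]
    refine Finset.sum_congr rfl fun α _ => ?_
    rw [hR α β]
    ring
  have hT'y : ∀ j : Fin N, T' (fun γ => y γ j) = -E j := by
    intro j
    exact generic (fun α β => ∑ γ, c α β γ • y γ j) (fun α β => hX α β j)
  -- the assignments as sums of site functions
  have hzD : (D i lam) = ∑ j, a j • (fun γ => y γ j) := by
    funext γ
    simp only [Finset.sum_apply, Pi.smul_apply]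
    exact hDa γ
  have hzD' : (D k mu) = ∑ j, b j • (fun γ => y γ j) := by
    funext γ
    simp only [Finset.sum_apply, Pi.smul_apply]
    exact hDb γ
  -- the two linear relations
  have rel1 : ∑ j, a j • E j = 0 := by
    calc ∑ j, a j • E j = T (∑ j, a j • (fun γ => y γ j)) := by
          rw [map_sum]
          exact Finset.sum_congr rfl fun j _ => (map_smul T (a j) _).symm
      _ = T (D i lam) := by rw [← hzD]
      _ = 0 := hTD
  have rel2 : ∑ j, b j • E j = 0 := by
    have : ∑ j, b j • E j = -T' (∑ j, b j • (fun γ => y γ j)) := by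
      rw [map_sum]
      rw [← Finset.sum_neg_distrib]
      refine Finset.sum_congr rfl fun j _ => ?_
      rw [map_smul, hT'y j, smul_neg, neg_neg]
    rw [this, ← hzD', hT'D, neg_zero]
  -- the bracket of the single-site generators
  have hbr : ∀ (α β : Fin M), P.bracket (D i lam α) (D k mu β)
      = ∑ j, (a j * b j) • (∑ γ, c α β γ • y γ j) := by
    intro α β
    rw [hDa α, hDb β]
    have h1 : P.bracket (∑ j, a j • y α j) = ∑ j, a j • P.bracket (y α j) := by
      rw [map_sum]
      exact Finset.sum_congr rfl fun j _ => map_smul _ _ _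
    rw [h1, LinearMap.sum_apply]
    refine Finset.sum_congr rfl fun j _ => ?_
    rw [LinearMap.smul_apply, map_sum, Finset.smul_sum]
    rw [Finset.sum_eq_single j]
    · rw [map_smul, hsame α β j, smul_smul]
    · intro j' _ hj'
      rw [map_smul, hsep α β j j' (Ne.symm hj'), smul_zero, smul_zero]
    · simp
  -- the main bracket expansion
  have main : P.bracket (aeval (D i lam) C) (aeval (D k mu) C')
      = ∑ j, (a j * b j) • E j := by
    have hd1 : ∀ u v : B, (P.bracket.flip (aeval (D k mu) C')) (u * v)
        = (P.bracket.flip (aeval (D k mu) C')) u * v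
          + u * (P.bracket.flip (aeval (D k mu) C')) v := by
      intro u v
      simp only [LinearMap.flip_apply]
      rw [P.antisymm (u * v), P.leibniz, P.antisymm u, P.antisymm v]
      ring
    have e1 : P.bracket (aeval (D i lam) C) (aeval (D k mu) C')
        = ∑ α, A α * P.bracket (D i lam α) (aeval (D k mu) C') := by
      have h := deriv_aeval (P.bracket.flip (aeval (D k mu) C')) hd1 (D i lam) C
      simpa [LinearMap.flip_apply, hA] using h
    have e2 : ∀ u : B, P.bracket u (aeval (D k mu) C')
        = ∑ β, Bf β * P.bracket u (D k mu β) := fun u =>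
      deriv_aeval (P.bracket u) (P.leibniz u) (D k mu) C'
    rw [e1]
    calc ∑ α, A α * P.bracket (D i lam α) (aeval (D k mu) C')
        = ∑ α, ∑ β, ∑ j, (a j * b j) • (A α * (Bf β * (∑ γ, c α β γ • y γ j))) := by
          refine Finset.sum_congr rfl fun α _ => ?_
          rw [e2, Finset.mul_sum]
          refine Finset.sum_congr rfl fun β _ => ?_
          rw [hbr α β, Finset.mul_sum, Finset.mul_sum]
          refine Finset.sum_congr rfl fun j _ => ?_
          rw [mul_smul_comm, mul_smul_comm]
      _ = ∑ j, ∑ α, ∑ β, (a j * b j) • (A α * (Bf β * (∑ γ, c α β γ • y γ j))) :=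
          sum_rot _
      _ = ∑ j, (a j * b j) • E j := by
          refine Finset.sum_congr rfl fun j _ => ?_
          show _ = (a j * b j) • ∑ β, Bf β * (∑ α, A α * (∑ γ, c α β γ • y γ j))
          rw [Finset.smul_sum, Finset.sum_comm]
          refine Finset.sum_congr rfl fun β _ => ?_
          rw [Finset.mul_sum, Finset.smul_sum]
          refine Finset.sum_congr rfl fun α _ => ?_
          rw [mul_left_comm]
  -- the interpolation coefficients
  obtain ⟨p, q, hpq⟩ : ∃ p q : K, ∀ j : Fin N, a j * b j = p * a j + q * b j := by
    rcases lt_trichotomy i k with hik | hik | hik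
    · refine ⟨mu⁻¹, 0, fun j => ?_⟩
      by_cases h1 : (j : ℕ) + 1 < i
      · rw [ha, hb]
        simp only
        rw [if_pos h1, if_pos (by omega : (j : ℕ) + 1 < k)]
        ring
      · by_cases h2 : (j : ℕ) + 1 = i
        · rw [ha, hb]
          simp only
          rw [if_neg h1, if_pos h2, if_pos (by omega : (j : ℕ) + 1 < k)]
          ring
        · rw [ha]
          simp only
          rw [if_neg h1, if_neg h2]
          ring
    · have hlm : lam ≠ mu := hne.resolve_left (by omega)
      have hml : mu - lam ≠ 0 := sub_ne_zero.mpr (Ne.symm hlm)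
      have hle : lam - ε ≠ 0 := sub_ne_zero.mpr hlame
      have hme : mu - ε ≠ 0 := sub_ne_zero.mpr hmue
      refine ⟨(mu - lam)⁻¹, -(mu - lam)⁻¹, fun j => ?_⟩
      by_cases h1 : (j : ℕ) + 1 < i
      · rw [ha, hb]
        simp only
        rw [if_pos h1, if_pos (by omega : (j : ℕ) + 1 < k)]
        field_simp
        ring
      · by_cases h2 : (j : ℕ) + 1 = i
        · rw [ha, hb]
          simp only
          rw [if_neg h1, if_pos h2, if_neg (by omega : ¬((j : ℕ) + 1 < k)),
            if_pos (by omega : (j : ℕ) + 1 = k)]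
          field_simp
          ring
        · rw [ha, hb]
          simp only
          rw [if_neg h1, if_neg h2, if_neg (by omega : ¬((j : ℕ) + 1 < k)),
            if_neg (by omega : ¬((j : ℕ) + 1 = k))]
          ring
    · refine ⟨0, lam⁻¹, fun j => ?_⟩
      by_cases h1 : (j : ℕ) + 1 < k
      · rw [ha, hb]
        simp only
        rw [if_pos h1, if_pos (by omega : (j : ℕ) + 1 < i)]
        ring
      · by_cases h2 : (j : ℕ) + 1 = k
        · rw [ha, hb]
          simp only
          rw [if_neg h1, if_pos h2, if_pos (by omega : (j : ℕ) + 1 < i)]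
          ring
        · rw [hb]
          simp only
          rw [if_neg h1, if_neg h2]
          ring
  rw [main]
  calc ∑ j, (a j * b j) • E j = ∑ j, (p • (a j • E j) + q • (b j • E j)) := by
        refine Finset.sum_congr rfl fun j _ => ?_
        rw [hpq j, add_smul, smul_smul, smul_smul]
    _ = p • (∑ j, a j • E j) + q • (∑ j, b j • E j) := by
        rw [Finset.sum_add_distrib, Finset.smul_sum, Finset.smul_sum]
    _ = 0 := by rw [rel1, rel2, smul_zero, smul_zero, add_zero]
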